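/- With the two-phase opinion dynamics defined in the context, the sum of final opinions satisfies Σ_i z^{(2)}_i = Σ_{i,j} c_i b_{ji} + Σ_j x²_j (θ_j/2)(Σ_i c_i b_{ji} + r_j) + Σ_j y²_j (θ_j/2)(Σ_i c_i b_{ji} − r_j) + Σ_i x¹_i (θ_i/2)(1+c_i)(s_i + Σ_j (x²_j + y²_j)(θ_j/2) b_{ji}) − Σ_i y¹_i (θ_i/2)(1−c_i)(s_i + Σ_j (x²_j + y²_j)(θ_j/2) b_{ji}). -/
import Mathlib


/-- closed form for the sum of final opinions `∑ i, z⁽²⁾ i` of the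
two-phase opinion dynamics. -/
theorem two_phase_sum_of_final_opinions (n : ℕ) (hn : 0 < n)
    (W : Matrix (Fin n) (Fin n) ℝ)
    (hW : ∀ i, ∑ j, |W i j| < 1)
    (w0 θ z0 x1 x2 y1 y2 : Fin n → ℝ)
    (Δ : Matrix (Fin n) (Fin n) ℝ) (hΔ : Δ = (1 - W)⁻¹)
    (r : Fin n → ℝ) (hr : ∀ i, r i = ∑ j, Δ j i)
    (c : Fin n → ℝ) (hc : ∀ i, c i = w0 i * z0 i)
    (b : Matrix (Fin n) (Fin n) ℝ) (hb : ∀ j i, b j i = r j * w0 j * Δ j i)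
    (s : Fin n → ℝ) (hs : ∀ i, s i = ∑ j, b j i)
    (w1g w1b : Fin n → ℝ)
    (hw1g : ∀ i, w1g i = θ i * (1 + w0 i * z0 i) / 2)
    (hw1b : ∀ i, w1b i = θ i * (1 - w0 i * z0 i) / 2)
    (z1 : Fin n → ℝ) (hz1 : z1 = Δ.mulVec (w0 * z0 + w1g * x1 - w1b * y1))
    (w2g w2b : Fin n → ℝ)
    (hw2g : ∀ i, w2g i = θ i * (1 + w0 i * z1 i) / 2)
    (hw2b : ∀ i, w2b i = θ i * (1 - w0 i * z1 i) / 2)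
    (z2 : Fin n → ℝ) (hz2 : z2 = Δ.mulVec (w0 * z1 + w2g * x2 - w2b * y2)) :
    ∑ i, z2 i =
      (∑ i, ∑ j, c i * b j i)
      + (∑ j, x2 j * (θ j / 2) * ((∑ i, c i * b j i) + r j))
      + (∑ j, y2 j * (θ j / 2) * ((∑ i, c i * b j i) - r j))
      + (∑ i, x1 i * (θ i / 2) * (1 + c i) *
          (s i + ∑ j, (x2 j + y2 j) * (θ j / 2) * b j i))
      - (∑ i, y1 i * (θ i / 2) * (1 - c i) *
          (s i + ∑ j, (x2 j + y2 j) * (θ j / 2) * b j i)) := by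
  -- abbreviation for the effective phase-1 source term
  set A : Fin n → ℝ :=
    fun i => c i + θ i / 2 * (1 + c i) * x1 i - θ i / 2 * (1 - c i) * y1 i with hA
  have hAeq : ∀ i, w0 i * z0 i + w1g i * x1 i - w1b i * y1 i = A i := by
    intro i; simp only [hA, hw1g i, hw1b i, hc i]; ring
  -- r k * (w0 k * z1 k) = ∑ j, b k j * A j
  have hT : ∀ k, r k * (w0 k * z1 k) = ∑ j, b k j * A j := by
    intro k
    have hz1k : z1 k = ∑ j, Δ k j * (w0 j * z0 j + w1g j * x1 j - w1b j * y1 j) := by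
      rw [hz1]
      simp only [Matrix.mulVec, dotProduct, Pi.add_apply, Pi.sub_apply, Pi.mul_apply]
    rw [hz1k, Finset.mul_sum, Finset.mul_sum]
    refine Finset.sum_congr rfl fun j _ => ?_
    rw [hb k j, hAeq j]; ring
  have hsum2 : ∑ i, z2 i = ∑ k, r k * (w0 k * z1 k + w2g k * x2 k - w2b k * y2 k) := by
    rw [hz2]
    simp only [Matrix.mulVec, dotProduct, Pi.add_apply, Pi.sub_apply, Pi.mul_apply]
    rw [Finset.sum_comm]
    refine Finset.sum_congr rfl fun k _ => ?_
    rw [← Finset.sum_mul, ← hr k]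
  -- the canonical form
  have key : ∑ i, z2 i =
      ∑ k, ((1 + (x2 k + y2 k) * (θ k / 2)) * (∑ j, b k j * A j)
              + (x2 k - y2 k) * (θ k / 2) * r k) := by
    rw [hsum2]
    refine Finset.sum_congr rfl fun k _ => ?_
    have h := hT k
    rw [hw2g k, hw2b k]
    linear_combination (1 + (x2 k + y2 k) * (θ k / 2)) * h
  rw [key]
  -- now massage the RHS of the statement into the same canonical form
  have h4 : ∀ (u : Fin n → ℝ),
      (∑ i, u i * (s i + ∑ j, (x2 j + y2 j) * (θ j / 2) * b j i))
        = ∑ k, ∑ i, u i * ((1 + (x2 k + y2 k) * (θ k / 2)) * b k i) := by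
    intro u
    rw [Finset.sum_comm]
    refine Finset.sum_congr rfl fun i _ => ?_
    rw [hs i, ← Finset.sum_add_distrib, Finset.mul_sum]
    refine Finset.sum_congr rfl fun k _ => ?_
    ring
  rw [h4 (fun i => x1 i * (θ i / 2) * (1 + c i)),
      h4 (fun i => y1 i * (θ i / 2) * (1 - c i)),
      Finset.sum_comm (f := fun i j => c i * b j i)]
  rw [← Finset.sum_add_distrib, ← Finset.sum_add_distrib, ← Finset.sum_add_distrib,
      ← Finset.sum_sub_distrib]
  refine Finset.sum_congr rfl fun k _ => ?_
  have hxy : (x2 k * (θ k / 2) * ((∑ i, c i * b k i) + r k)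
        + y2 k * (θ k / 2) * ((∑ i, c i * b k i) - r k))
      = (∑ i, (x2 k + y2 k) * (θ k / 2) * (c i * b k i))
        + (x2 k - y2 k) * (θ k / 2) * r k := by
    rw [← Finset.mul_sum]
    ring
  have main : (∑ j, b k j * A j)
      = (∑ i, c i * b k i) + (∑ i, (x2 k + y2 k) * (θ k / 2) * (c i * b k i))
        + ((∑ i, x1 i * (θ i / 2) * (1 + c i) * ((1 + (x2 k + y2 k) * (θ k / 2)) * b k i))
          - (∑ i, y1 i * (θ i / 2) * (1 - c i) * ((1 + (x2 k + y2 k) * (θ k / 2)) * b k i)))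
        - (∑ i, (x2 k + y2 k) * (θ k / 2) * (b k i * A i)) := by
    rw [← Finset.sum_sub_distrib, ← Finset.sum_add_distrib, ← Finset.sum_add_distrib,
      ← Finset.sum_sub_distrib]
    refine Finset.sum_congr rfl fun i _ => ?_
    simp only [hA]
    ring
  have mulT : (1 + (x2 k + y2 k) * (θ k / 2)) * (∑ j, b k j * A j)
      = (∑ j, b k j * A j) + (∑ i, (x2 k + y2 k) * (θ k / 2) * (b k i * A i)) := by
    rw [← Finset.mul_sum]
    ring
  rw [mulT, main]
  linarith [hxy]
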